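/- arXiv:1903.09619 — 2 statements merged into one kernel-verified Lean document; each statement's English description precedes it below -/
import Mathlib

section
/- For all natural numbers n ≥ 1 and k ≥ 0, if n ≤ 2^k then H(n) ≤ k. -/
/-- The height function: H(1) = 0 and H(n) = H(φ(n)) + 1 for n ≥ 2. -/
def H : ℕ → ℕ
  | 0 => 0
  | 1 => 0
  | n + 2 => H (Nat.totient (n + 2)) + 1
  decreasing_by exact Nat.totient_lt _ (by omega)

/-- The sum-of-heights function S(n) = ∑_{k=1}^n H(k). -/
def S (n : ℕ) : ℕ := ∑ k ∈ Finset.Icc 1 n, H k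

lemma H_eq {n : ℕ} (hn : 2 ≤ n) : H n = H n.totient + 1 := by
  obtain ⟨m, rfl⟩ : ∃ m, n = m + 2 := ⟨n - 2, by omega⟩
  rw [H]

/-- For even m, 2 * φ(m) ≤ m. -/
lemma two_mul_totient_le {m : ℕ} (h0 : 0 < m) (hm : 2 ∣ m) : 2 * m.totient ≤ m := by
  set a := m.factorization 2 with ha
  have ha1 : 1 ≤ a := Nat.Prime.factorization_pos_of_dvd Nat.prime_two h0.ne' hm
  have hsplit : 2 ^ a * (m / 2 ^ a) = m := Nat.ordProj_mul_ordCompl_eq_self m 2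
  have hcop : Nat.Coprime (2 ^ a) (m / 2 ^ a) :=
    Nat.Coprime.pow_left _ (Nat.coprime_ordCompl Nat.prime_two h0.ne')
  obtain ⟨a', ha'⟩ : ∃ a', a = a' + 1 := ⟨a - 1, by omega⟩
  have htot : m.totient = (2 ^ a).totient * (m / 2 ^ a).totient := by
    conv_lhs => rw [← hsplit]
    rw [Nat.totient_mul hcop]
  have h2a : (2 ^ a).totient = 2 ^ a' := by
    rw [ha', Nat.totient_prime_pow_succ Nat.prime_two]; simp
  calc 2 * m.totient = 2 * (2 ^ a' * (m / 2 ^ a).totient) := by rw [htot, h2a]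
    _ = 2 ^ a * (m / 2 ^ a).totient := by rw [ha']; ring
    _ ≤ 2 ^ a * (m / 2 ^ a) := Nat.mul_le_mul_left _ (Nat.totient_le _)
    _ = m := hsplit

/-- For even positive m, 2^(H m) ≤ m. -/
lemma pow_H_le_of_even : ∀ m : ℕ, 0 < m → 2 ∣ m → 2 ^ H m ≤ m := by
  intro m
  induction m using Nat.strong_induction_on with
  | _ m ih =>
    intro h0 hm
    rcases eq_or_lt_of_le (show 2 ≤ m by omega) with h2 | h2
    · subst h2; simp [H]
    · have htpos : 0 < m.totient := Nat.totient_pos.mpr h0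
      have htlt : m.totient < m := Nat.totient_lt m (by omega)
      have hteven : 2 ∣ m.totient := (Nat.totient_even h2).two_dvd
      have := ih m.totient htlt htpos hteven
      rw [H_eq (by omega), pow_succ, mul_comm]
      calc 2 * 2 ^ H m.totient ≤ 2 * m.totient := by omega
        _ ≤ m := two_mul_totient_le h0 hm

theorem height_le_of_le_pow (n k : ℕ) (hn : 1 ≤ n) (h : n ≤ 2 ^ k) :
    H n ≤ k := by
  induction n using Nat.strong_induction_on with
  | _ n ih =>
    rcases show n = 1 ∨ n = 2 ∨ 2 < n by omega with rfl | rfl | h3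
    · simp [H]
    · have hk : 1 ≤ k := by
        by_contra hk
        interval_cases k; omega
      simp only [H_eq (le_refl 2), Nat.totient_two]
      simp [H]; omega
    · -- φ n is even and positive, φ n < n ≤ 2^k
      have htpos : 0 < n.totient := Nat.totient_pos.mpr (by omega)
      have hteven : 2 ∣ n.totient := (Nat.totient_even h3).two_dvd
      have htlt : n.totient < n := Nat.totient_lt n (by omega)
      have hle : 2 ^ H n.totient ≤ n.totient := pow_H_le_of_even _ htpos hteven
      have hlt : 2 ^ H n.totient < 2 ^ k := by omega
      have : H n.totient < k := (Nat.pow_lt_pow_iff_right one_lt_two).mp hlt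
      rw [H_eq (by omega)]
      omega
end

section
/- Let k > 2. Then the set of natural numbers n with H(n) = k and 4·3^{k−2} < n ≤ 2·3^{k−1} is exactly the set of numbers of the form m = 2·3^{k−a}·p, where 2 ≤ a ≤ k and p = 2·3^{a−2} + 1 is prime. -/
def c : ℕ → ℕ
  | p =>
    if _ : p < 3 then 0
    else ((p-1).primeFactorsList.attach.map (fun q => c q.1)).sum + (p-1).factorization 2
  decreasing_by
    · rename_i hq
      have h1 : q.1 ∣ (p-1) := Nat.dvd_of_mem_primeFactorsList q.2
      have : q.1 ≤ p - 1 := Nat.le_of_dvd (by omega) h1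
      omega

def W (n : ℕ) : ℕ := (n.primeFactorsList.map c).sum

lemma c_eq {p : ℕ} (h : 3 ≤ p) : c p = W (p-1) + (p-1).factorization 2 := by
  rw [c, dif_neg (by omega)]
  congr 1
  rw [W, List.attach_map_val]

lemma c_two : c 2 = 0 := by rw [c]; rfl

lemma W_zero : W 0 = 0 := by simp [W]
lemma W_one : W 1 = 0 := by simp [W]
lemma W_two : W 2 = 0 := by
  rw [W, Nat.primeFactorsList_prime Nat.prime_two]
  simp [c_two]

lemma W_prime {p : ℕ} (hp : p.Prime) : W p = c p := by
  rw [W, Nat.primeFactorsList_prime hp]; simp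

lemma c_prime_eq {p : ℕ} (hp : p.Prime) : c p = W (p-1) + (p-1).factorization 2 := by
  rcases eq_or_lt_of_le hp.two_le with h | h
  · rw [← h]; simpa [W_one] using c_two
  · exact c_eq h

lemma W_mul {a b : ℕ} (ha : a ≠ 0) (hb : b ≠ 0) : W (a * b) = W a + W b := by
  rw [W, W, W, ← List.sum_append, ← List.map_append]
  exact List.Perm.sum_eq (List.Perm.map c (Nat.perm_primeFactorsList_mul ha hb))

lemma W_pow {a : ℕ} (ha : a ≠ 0) (k : ℕ) : W (a ^ k) = k * W a := by
  induction k with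
  | zero => simp [W_one]
  | succ j ih => rw [pow_succ, W_mul (pow_ne_zero _ ha) ha, ih]; ring

lemma c_three : c 3 = 1 := by
  rw [c_eq (by norm_num)]
  norm_num [W_two, Nat.Prime.factorization Nat.prime_two]

lemma W_two_pow (k : ℕ) : W (2 ^ k) = 0 := by simp [W_pow, W_two]
lemma W_three_pow (k : ℕ) : W (3 ^ k) = k := by
  simp [W_pow, W_prime Nat.prime_three, c_three]

/-- Sum over distinct prime factors of the 2-adic valuation of p-1. -/
def Sw (n : ℕ) : ℕ := ∑ p ∈ n.primeFactors, (p-1).factorization 2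

lemma Sw_one : Sw 1 = 0 := by simp [Sw]

lemma v2_mul {a b : ℕ} (ha : a ≠ 0) (hb : b ≠ 0) :
    (a * b).factorization 2 = a.factorization 2 + b.factorization 2 := by
  rw [Nat.factorization_mul ha hb]; rfl

lemma v2_pow (a k : ℕ) : (a ^ k).factorization 2 = k * a.factorization 2 := by
  rw [Nat.factorization_pow]; rfl

lemma v2_odd_prime {p : ℕ} (hp : p.Prime) (h : p ≠ 2) : p.factorization 2 = 0 := by
  rw [hp.factorization]
  simp [Finsupp.single_apply, h]

lemma v2_two : (2 : ℕ).factorization 2 = 1 := by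
  rw [Nat.Prime.factorization Nat.prime_two]; simp

lemma v2_of_odd {m : ℕ} (h : ¬ 2 ∣ m) : m.factorization 2 = 0 :=
  Nat.factorization_eq_zero_of_not_dvd h

/-- decomposition facts -/
lemma Sw_eq {p e m : ℕ} (hp : p.Prime) (he : 1 ≤ e) (hm : m ≠ 0) (hpm : ¬ p ∣ m) :
    Sw (p ^ e * m) = (p-1).factorization 2 + Sw m := by
  rw [Sw, Nat.primeFactors_mul (pow_ne_zero _ hp.pos.ne') hm,
    Nat.primeFactors_pow _ (by omega), Nat.Prime.primeFactors hp]
  rw [← Finset.insert_eq, Finset.sum_insert (by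
    intro hmem
    exact hpm (Nat.dvd_of_mem_primeFactors hmem))]
  rfl

lemma phiW : ∀ n : ℕ, n ≠ 0 → W n = W n.totient + Sw n ∧
    n.totient.factorization 2 + min 1 (n.factorization 2) = n.factorization 2 + Sw n := by
  intro n
  induction n using Nat.strong_induction_on with
  | _ n ih =>
  intro hn0
  rcases eq_or_lt_of_le (Nat.one_le_iff_ne_zero.mpr hn0) with h1 | h2
  · rw [← h1]; simp [Sw_one, W_one]
  -- n ≥ 2
  have hn1 : n ≠ 1 := by omega
  set p := n.minFac with hpdef
  have hp : p.Prime := Nat.minFac_prime hn1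
  set e := n.factorization p with hedef
  set m := ordCompl[p] n with hmdef
  have hm0 : m ≠ 0 := (Nat.ordCompl_pos p hn0).ne'
  have hpm : ¬ p ∣ m := Nat.not_dvd_ordCompl hp hn0
  have he1 : 1 ≤ e := hp.factorization_pos_of_dvd hn0 (Nat.minFac_dvd n)
  have hn : n = p ^ e * m := (Nat.ordProj_mul_ordCompl_eq_self n p).symm
  have hmn : m < n := by
    have h2e : 2 ≤ p ^ e := by
      calc 2 ≤ p := hp.two_le
      _ ≤ p ^ e := Nat.le_self_pow (by omega) p
    nlinarith [Nat.pos_of_ne_zero hm0]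
  obtain ⟨IH1, IH2⟩ := ih m hmn hm0
  have hphi : n.totient = (p ^ (e-1) * (p-1)) * m.totient := by
    rw [hn, Nat.totient_mul ((Nat.coprime_ordCompl hp hn0).pow_left e),
      Nat.totient_prime_pow hp (by omega)]
  have hp1 : p - 1 ≠ 0 := by have := hp.two_le; omega
  have hφm : m.totient ≠ 0 := (Nat.totient_pos.mpr (Nat.pos_of_ne_zero hm0)).ne'
  have hWn : W n = e * c p + W m := by
    rw [hn, W_mul (pow_ne_zero _ hp.pos.ne') hm0, W_pow hp.pos.ne', W_prime hp]
  have hWphi : W n.totient = (e-1) * c p + W (p-1) + W m.totient := by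
    rw [hphi, W_mul (Nat.mul_ne_zero (pow_ne_zero _ hp.pos.ne') hp1) hφm, W_mul (pow_ne_zero _ hp.pos.ne') hp1,
      W_pow hp.pos.ne', W_prime hp]
  have hc : c p = W (p-1) + (p-1).factorization 2 := c_prime_eq hp
  have hSw : Sw n = (p-1).factorization 2 + Sw m := by rw [hn]; exact Sw_eq hp he1 hm0 hpm
  have hmdvd : m ∣ n := Nat.ordCompl_dvd n p
  clear_value p e m
  constructor
  · obtain ⟨e', rfl⟩ : ∃ e', e = e' + 1 := ⟨e - 1, by omega⟩
    simp only [Nat.add_sub_cancel] at hWphi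
    have : (e' + 1) * c p = e' * c p + c p := by ring
    rw [hWn, this, hc, hWphi, IH1, hSw]
    simp only [hc]
    ring
  · -- v2 part
    have hv2phi : n.totient.factorization 2
        = (e-1) * p.factorization 2 + (p-1).factorization 2 + m.totient.factorization 2 := by
      rw [hphi, v2_mul (Nat.mul_ne_zero (pow_ne_zero _ hp.pos.ne') hp1) hφm, v2_mul (pow_ne_zero _ hp.pos.ne') hp1, v2_pow]
    have hv2n : n.factorization 2 = e * p.factorization 2 + m.factorization 2 := by
      rw [hn, v2_mul (pow_ne_zero _ hp.pos.ne') hm0, v2_pow]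
    by_cases hp2 : p = 2
    · have hv2m : m.factorization 2 = 0 := v2_of_odd (by rw [← hp2]; exact hpm)
      rw [hv2m, Nat.min_zero, add_zero] at IH2
      rw [hv2phi, hv2n, hSw, hv2m, IH2, hp2, v2_two]
      have : ((2:ℕ) - 1).factorization 2 = 0 := by norm_num
      rw [this]
      omega
    · have hv2p : p.factorization 2 = 0 := v2_odd_prime hp hp2
      have h2n : ¬ 2 ∣ n := by
        intro h2
        have := Nat.minFac_le_of_dvd (le_refl 2) h2
        have := Nat.minFac_prime hn1
        exact hp2 (by omega)
      have hv2m : m.factorization 2 = 0 := v2_of_odd (fun h => h2n (h.trans hmdvd))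
      rw [hv2m, Nat.min_zero, add_zero] at IH2
      rw [hv2phi, hv2n, hSw, hv2m, hv2p, IH2]
      omega

lemma H_rec {n : ℕ} (h : 2 ≤ n) : H n = H n.totient + 1 := by
  obtain ⟨m, rfl⟩ : ∃ m, n = m + 2 := ⟨n - 2, by omega⟩
  rw [H]

lemma H_one : H 1 = 0 := by rw [H]

lemma Sw_pos {n : ℕ} (h3 : 3 ≤ n) (hv : n.factorization 2 ≤ 1) : 1 ≤ Sw n := by
  have hn0 : n ≠ 0 := by omega
  -- find odd prime factor
  set m := ordCompl[2] n with hmdef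
  have hm0 : m ≠ 0 := (Nat.ordCompl_pos 2 hn0).ne'
  have h2m : ¬ 2 ∣ m := Nat.not_dvd_ordCompl Nat.prime_two hn0
  have hmdvd : m ∣ n := Nat.ordCompl_dvd n 2
  have hm1 : m ≠ 1 := by
    intro h1
    have hn : n = 2 ^ n.factorization 2 := by
      have := Nat.ordProj_mul_ordCompl_eq_self n 2
      rw [← hmdef, h1, mul_one] at this
      omega
    have hle : (2:ℕ) ^ n.factorization 2 ≤ 2 ^ 1 := Nat.pow_le_pow_right (by norm_num) hv
    norm_num at hle
    omega
  set q := m.minFac with hq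
  have hqp : q.Prime := Nat.minFac_prime hm1
  have hq2 : q ≠ 2 := by
    intro h
    exact h2m (h ▸ m.minFac_dvd)
  have hqmem : q ∈ n.primeFactors :=
    Nat.mem_primeFactors.mpr ⟨hqp, m.minFac_dvd.trans hmdvd, hn0⟩
  have hqodd : 2 ∣ q - 1 := by
    have h2q := hqp.two_le
    obtain ⟨r, hr⟩ := hqp.odd_of_ne_two hq2
    omega
  have h1 : 1 ≤ (q - 1).factorization 2 :=
    Nat.Prime.factorization_pos_of_dvd Nat.prime_two (by have := hqp.two_le; omega) hqodd
  calc 1 ≤ (q - 1).factorization 2 := h1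
    _ ≤ Sw n := by
      rw [Sw]
      exact Finset.single_le_sum (f := fun p => (p - 1).factorization 2) (fun i _ => Nat.zero_le _) hqmem

/-- Main identity: H n = W n + max 1 (v2 n) for n ≥ 2. -/
lemma H_eq_s15 : ∀ n : ℕ, 2 ≤ n → H n = W n + max 1 (n.factorization 2) := by
  intro n
  induction n using Nat.strong_induction_on with
  | _ n ih =>
  intro hn2
  rcases eq_or_lt_of_le hn2 with h2 | h3
  · rw [← h2, H_rec (le_refl 2), Nat.totient_two, H_one, W_two, v2_two]
    norm_num
  · -- n ≥ 3
    have hn0 : n ≠ 0 := by omega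
    have hphi2 : 2 ≤ n.totient := by
      have he : Even n.totient := Nat.totient_even h3
      have hp : 0 < n.totient := Nat.totient_pos.mpr (by omega)
      rcases he with ⟨t, ht⟩
      omega
    have hlt : n.totient < n := Nat.totient_lt n (by omega)
    rw [H_rec (by omega), ih n.totient hlt hphi2]
    obtain ⟨hW, hv⟩ := phiW n hn0
    rw [hW]
    -- remains: max arithmetic
    set t := n.factorization 2 with htdef
    set s := Sw n with hsdef
    set u := n.totient.factorization 2 with hudef
    have hs1 : t ≤ 1 → 1 ≤ s := fun h => Sw_pos (by omega) h
    rcases Nat.lt_or_ge t 2 with ht | ht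
    · have : 1 ≤ s := hs1 (by omega)
      omega
    · omega

lemma two_pow_le {e : ℕ} (he : 1 ≤ e) : 2 ^ e ≤ 2 * 3 ^ (e - 1) := by
  obtain ⟨f, rfl⟩ : ∃ f, e = f + 1 := ⟨e - 1, by omega⟩
  rw [pow_succ, Nat.add_sub_cancel]
  calc 2 ^ f * 2 ≤ 3 ^ f * 2 := Nat.mul_le_mul_right 2 (Nat.pow_le_pow_left (by norm_num) f)
    _ = 2 * 3 ^ f := mul_comm _ _

lemma tm3p (j : ℕ) : 2 * 3 ^ j + 1 ≤ 3 ^ (j + 1) := by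
  have h : 1 ≤ 3 ^ j := Nat.one_le_pow j 3 (by norm_num)
  rw [pow_succ]
  omega

/-- structure of an odd prime: p = 2^e * w + 1 with w odd, and c p = W w + e. -/
lemma prime_struct {p : ℕ} (hp : p.Prime) (h3 : 3 ≤ p) :
    ∃ e w, 1 ≤ e ∧ Odd w ∧ w < p ∧ p = 2 ^ e * w + 1 ∧ c p = W w + e := by
  have hpodd : Odd p := hp.odd_of_ne_two (by omega)
  have hp1 : p - 1 ≠ 0 := by omega
  set e := (p - 1).factorization 2 with hedef
  set w := ordCompl[2] (p - 1) with hwdef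
  have hw0 : w ≠ 0 := (Nat.ordCompl_pos 2 hp1).ne'
  have h2w : ¬ 2 ∣ w := Nat.not_dvd_ordCompl Nat.prime_two hp1
  have hdecomp : 2 ^ e * w = p - 1 := Nat.ordProj_mul_ordCompl_eq_self (p - 1) 2
  have he1 : 1 ≤ e := by
    refine Nat.Prime.factorization_pos_of_dvd Nat.prime_two hp1 ?_
    obtain ⟨r, hr⟩ := hpodd
    omega
  have hwodd : Odd w := Nat.odd_iff.mpr (by omega)
  have hwlt : w < p := by
    have : w ≤ p - 1 := Nat.le_of_dvd (by omega) (Nat.ordCompl_dvd _ 2)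
    omega
  have hc : c p = W w + e := by
    rw [c_prime_eq hp, ← hedef, ← hdecomp, W_mul (pow_ne_zero _ (by norm_num)) hw0, W_two_pow]
    simp
  exact ⟨e, w, he1, hwodd, hwlt, by omega, hc⟩

lemma B0 : ∀ u : ℕ, Odd u → u ≤ 3 ^ W u := by
  intro u
  induction u using Nat.strong_induction_on with
  | _ u ih =>
  intro hu
  have hu0 : u ≠ 0 := by rintro rfl; simp [Nat.odd_iff] at hu
  rcases eq_or_ne u 1 with rfl | hu1
  · simp [W_one]
  have hu3 : 3 ≤ u := by
    obtain ⟨r, hr⟩ := hu; omega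
  set q := u.minFac with hq
  have hqp : q.Prime := Nat.minFac_prime hu1
  have hq2 : q ≠ 2 := by
    intro h
    have h2u : (2:ℕ) ∣ u := by rw [← h, hq]; exact u.minFac_dvd
    exact (Nat.not_even_iff_odd.mpr hu) (even_iff_two_dvd.mpr h2u)
  have hq3 : 3 ≤ q := by have := hqp.two_le; omega
  set u' := u / q with hu'
  have hqd : q ∣ u := u.minFac_dvd
  have huu : u = q * u' := (Nat.mul_div_cancel' hqd).symm
  have hu'0 : u' ≠ 0 := by rintro h; rw [h, mul_zero] at huu; omega
  have hu'odd : Odd u' := by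
    rcases Nat.even_or_odd u' with he | ho
    · exfalso; obtain ⟨t, ht⟩ := he
      have : Even u := by rw [huu, ht]; exact ⟨q * t, by ring⟩
      exact (Nat.not_even_iff_odd.mpr hu) this
    · exact ho
  have hWu : W u = c q + W u' := by
    rw [huu, W_mul hqp.pos.ne' hu'0, W_prime hqp]
  rcases eq_or_ne u' 1 with h1 | hne
  · -- u is prime
    have hup : u = q := by rw [huu, h1, mul_one]
    obtain ⟨e, w, he1, hwodd, hwlt, hpw, hc⟩ := prime_struct (hup ▸ hqp) hu3
    have ihw : w ≤ 3 ^ W w := ih w hwlt hwodd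
    have h2e : 2 ^ e ≤ 2 * 3 ^ (e - 1) := two_pow_le he1
    have hWuc : W u = W w + e := by rw [hWu, h1, W_one, add_zero, ← hup, hc]
    calc u = 2 ^ e * w + 1 := hpw
      _ ≤ (2 * 3 ^ (e - 1)) * 3 ^ W w + 1 := by
          have := Nat.mul_le_mul h2e ihw; omega
      _ = 2 * 3 ^ (e - 1 + W w) + 1 := by rw [mul_assoc, ← pow_add]
      _ ≤ 3 ^ (e - 1 + W w + 1) := tm3p _
      _ = 3 ^ W u := by
          have hee : e - 1 + W w + 1 = W w + e := by omega
          rw [hee, hWuc]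
  · -- u' ≥ 3, composite case
    have hu'3 : 3 ≤ u' := by obtain ⟨r, hr⟩ := hu'odd; omega
    have hu'lt : u' < u := by
      have : 2 * u' ≤ q * u' := Nat.mul_le_mul_right u' hqp.two_le
      omega
    have hqlt : q < u := by
      have : q * 3 ≤ q * u' := Nat.mul_le_mul_left q hu'3
      omega
    have ih1 : q ≤ 3 ^ W q := ih q hqlt (hqp.odd_of_ne_two hq2)
    have ih2 : u' ≤ 3 ^ W u' := ih u' hu'lt hu'odd
    calc u = q * u' := huu
      _ ≤ 3 ^ W q * 3 ^ W u' := Nat.mul_le_mul ih1 ih2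
      _ = 3 ^ (c q + W u') := by rw [W_prime hqp, ← pow_add]
      _ = 3 ^ W u := by rw [hWu]

lemma B1 {p : ℕ} (hp : p.Prime) (h3 : 3 ≤ p) :
    1 ≤ c p ∧ p ≤ 2 * 3 ^ (c p - 1) + 1 := by
  obtain ⟨e, w, he1, hwodd, hwlt, hpw, hc⟩ := prime_struct hp h3
  have ihw : w ≤ 3 ^ W w := B0 w hwodd
  have h2e : 2 ^ e ≤ 2 * 3 ^ (e - 1) := two_pow_le he1
  constructor
  · omega
  · calc p = 2 ^ e * w + 1 := hpw
      _ ≤ (2 * 3 ^ (e - 1)) * 3 ^ W w + 1 := by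
          have := Nat.mul_le_mul h2e ihw; omega
      _ = 2 * 3 ^ (e - 1 + W w) + 1 := by rw [mul_assoc, ← pow_add]
      _ = 2 * 3 ^ (c p - 1) + 1 := by
          have hee : e - 1 + W w = W w + e - 1 := by omega
          rw [hee, hc]

lemma B1' {p : ℕ} (hp : p.Prime) (h5 : 5 ≤ p) : 2 ≤ c p := by
  obtain ⟨h1, h2⟩ := B1 hp (by omega)
  by_contra h
  have hcp : c p = 1 := by omega
  rw [hcp] at h2
  norm_num at h2
  omega

lemma nine_q {q : ℕ} (hqp : q.Prime) (hq5 : 5 ≤ q) : 9 * q ≤ 7 * 3 ^ c q := by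
  have hcq : 2 ≤ c q := B1' hqp hq5
  have hqb : q ≤ 2 * 3 ^ (c q - 1) + 1 := (B1 hqp (by omega)).2
  have h39 : 9 ≤ 3 ^ c q := by
    calc (9:ℕ) = 3 ^ 2 := by norm_num
    _ ≤ 3 ^ c q := Nat.pow_le_pow_right (by norm_num) hcq
  have hsplit : 3 ^ c q = 3 * 3 ^ (c q - 1) := by
    rw [← pow_succ']
    congr 1
    omega
  calc 9 * q ≤ 9 * (2 * 3 ^ (c q - 1) + 1) := Nat.mul_le_mul_left 9 hqb
    _ = 6 * (3 * 3 ^ (c q - 1)) + 9 := by ring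
    _ = 6 * 3 ^ c q + 9 := by rw [← hsplit]
    _ ≤ 6 * 3 ^ c q + 3 ^ c q := by omega
    _ = 7 * 3 ^ c q := by ring

lemma B2 {m : ℕ} (hm : Odd m) (h3 : ¬ 3 ∣ m) (h2 : 2 ≤ m) : 9 * m ≤ 7 * 3 ^ W m := by
  have hm1 : m ≠ 1 := by omega
  set q := m.minFac with hq
  have hqp : q.Prime := Nat.minFac_prime hm1
  have hqd : q ∣ m := m.minFac_dvd
  have hq2 : q ≠ 2 := by
    intro h
    have h2u : (2:ℕ) ∣ m := by rw [← h, hq]; exact m.minFac_dvd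
    exact (Nat.not_even_iff_odd.mpr hm) (even_iff_two_dvd.mpr h2u)
  have hq3 : q ≠ 3 := fun h => h3 (h ▸ hqd)
  have hq4 : q ≠ 4 := fun h => (by norm_num : ¬ (4:ℕ).Prime) (h ▸ hqp)
  have hq5 : 5 ≤ q := by have := hqp.two_le; omega
  have hcq : 2 ≤ c q := B1' hqp hq5
  have hqb : q ≤ 2 * 3 ^ (c q - 1) + 1 := (B1 hqp (by omega)).2
  set m'' := m / q with hm''
  have hmm : m = q * m'' := (Nat.mul_div_cancel' hqd).symm
  have hm''0 : m'' ≠ 0 := by rintro h; rw [h, mul_zero] at hmm; omega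
  have hm''odd : Odd m'' := by
    rcases Nat.even_or_odd m'' with he | ho
    · exfalso; obtain ⟨t, ht⟩ := he
      exact (Nat.not_even_iff_odd.mpr hm) ⟨q * t, by rw [hmm, ht]; ring⟩
    · exact ho
  have hbm'' : m'' ≤ 3 ^ W m'' := B0 m'' hm''odd
  have hWm : W m = c q + W m'' := by rw [hmm, W_mul hqp.pos.ne' hm''0, W_prime hqp]
  have h9q : 9 * q ≤ 7 * 3 ^ c q := nine_q hqp hq5
  calc 9 * m = (9 * q) * m'' := by rw [hmm]; ring
    _ ≤ (7 * 3 ^ c q) * 3 ^ W m'' := Nat.mul_le_mul h9q hbm''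
    _ = 7 * 3 ^ (c q + W m'') := by rw [mul_assoc, ← pow_add]
    _ = 7 * 3 ^ W m := by rw [hWm]

lemma lemB : ∀ m : ℕ, Odd m → 3 ≤ m → 2 * 3 ^ W m < 3 * m →
    ∃ a, 2 ≤ a ∧ a ≤ W m + 1 ∧ (2 * 3 ^ (a - 2) + 1).Prime ∧
      m = 3 ^ (W m + 1 - a) * (2 * 3 ^ (a - 2) + 1) := by
  intro m
  induction m using Nat.strong_induction_on with
  | _ m ih =>
  intro hm hm3 hbig
  have hm1 : m ≠ 1 := by omega
  set q := m.minFac with hq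
  have hqp : q.Prime := Nat.minFac_prime hm1
  have hqd : q ∣ m := m.minFac_dvd
  have hq2 : q ≠ 2 := by
    intro h
    have h2u : (2:ℕ) ∣ m := by rw [← h, hq]; exact m.minFac_dvd
    exact (Nat.not_even_iff_odd.mpr hm) (even_iff_two_dvd.mpr h2u)
  set m' := m / q with hm'def
  have hmm : m = q * m' := (Nat.mul_div_cancel' hqd).symm
  have hm'0 : m' ≠ 0 := by rintro h; rw [h, mul_zero] at hmm; omega
  have hm'odd : Odd m' := by
    rcases Nat.even_or_odd m' with he | ho
    · exfalso; obtain ⟨t, ht⟩ := he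
      exact (Nat.not_even_iff_odd.mpr hm) ⟨q * t, by rw [hmm, ht]; ring⟩
    · exact ho
  have hWm : W m = c q + W m' := by rw [hmm, W_mul hqp.pos.ne' hm'0, W_prime hqp]
  rcases eq_or_ne q 3 with hq3 | hq3
  · -- least prime factor is 3
    have hWm1 : W m = 1 + W m' := by rw [hWm, hq3, c_three]
    rcases eq_or_ne m' 1 with h1 | hne
    · -- m = 3
      have hm3' : m = 3 := by rw [hmm, h1, mul_one, hq3]
      refine ⟨2, le_refl 2, ?_, by norm_num, ?_⟩
      · omega
      · subst hm3'
        rw [hWm1, h1, W_one] at *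
        norm_num
    · have hm'3 : 3 ≤ m' := by obtain ⟨r, hr⟩ := hm'odd; omega
      have hm'lt : m' < m := by
        have : 2 * m' ≤ q * m' := Nat.mul_le_mul_right m' hqp.two_le
        omega
      have hbig' : 2 * 3 ^ W m' < 3 * m' := by
        have h3 : 2 * 3 ^ W m = 3 * (2 * 3 ^ W m') := by
          rw [hWm1, pow_add, pow_one]; ring
        have h4 : 3 * m = 3 * (3 * m') := by rw [hmm, hq3]
        rw [h3, h4] at hbig
        omega
      obtain ⟨a, ha2, hale, hap, hastruct⟩ := ih m' hm'lt hm'odd hm'3 hbig'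
      refine ⟨a, ha2, by omega, hap, ?_⟩
      have hexp : W m + 1 - a = (W m' + 1 - a) + 1 := by omega
      rw [hexp, pow_succ]
      calc m = 3 * m' := by rw [hmm, hq3]
        _ = 3 * (3 ^ (W m' + 1 - a) * (2 * 3 ^ (a - 2) + 1)) := by rw [← hastruct]
        _ = 3 ^ (W m' + 1 - a) * 3 * (2 * 3 ^ (a - 2) + 1) := by ring
  · -- least prime factor ≥ 5
    have hq4 : q ≠ 4 := fun h => (by norm_num : ¬ (4:ℕ).Prime) (h ▸ hqp)
    have hq5 : 5 ≤ q := by have := hqp.two_le; omega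
    have hcq : 2 ≤ c q := B1' hqp hq5
    have hqb : q ≤ 2 * 3 ^ (c q - 1) + 1 := (B1 hqp (by omega)).2
    have h3m : ¬ 3 ∣ m := by
      intro h3
      have := Nat.minFac_le_of_dvd (by norm_num) h3
      omega
    rcases eq_or_ne m' 1 with h1 | hne
    · -- m = q prime
      have hmq : m = q := by rw [hmm, h1, mul_one]
      have hWq : W m = c q := by rw [hWm, h1, W_one, add_zero]
      have hsplit : 3 ^ c q = 3 * 3 ^ (c q - 1) := by
        rw [← pow_succ']; congr 1; omega
      have hqlb : 2 * 3 ^ (c q - 1) < q := by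
        rw [hWq, hmq, hsplit] at hbig
        omega
      have hqodd : Odd q := hqp.odd_of_ne_two hq2
      have hqeq : q = 2 * 3 ^ (c q - 1) + 1 := by
        obtain ⟨r, hr⟩ := hqodd
        omega
      refine ⟨c q + 1, by omega, by omega, ?_, ?_⟩
      · have : c q + 1 - 2 = c q - 1 := by omega
        rw [this, ← hqeq]
        exact hqp
      · have h0 : W m + 1 - (c q + 1) = 0 := by omega
        have h2 : c q + 1 - 2 = c q - 1 := by omega
        rw [h0, h2, pow_zero, one_mul, ← hqeq, hmq]
    · -- contradiction case
      exfalso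
      have hm'3 : 3 ≤ m' := by obtain ⟨r, hr⟩ := hm'odd; omega
      have h3m' : ¬ 3 ∣ m' := fun h => h3m (h.trans ⟨q, by rw [hmm]; ring⟩)
      have hB2 : 9 * m' ≤ 7 * 3 ^ W m' := B2 hm'odd h3m' (by omega)
      have h9q : 9 * q ≤ 7 * 3 ^ c q := nine_q hqp hq5
      have hprod : 81 * m ≤ 49 * 3 ^ W m := by
        calc 81 * m = (9 * q) * (9 * m') := by rw [hmm]; ring
          _ ≤ (7 * 3 ^ c q) * (7 * 3 ^ W m') := Nat.mul_le_mul h9q hB2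
          _ = 49 * 3 ^ (c q + W m') := by rw [pow_add]; ring
          _ = 49 * 3 ^ W m := by rw [hWm]
      have hx : 1 ≤ 3 ^ W m := Nat.one_le_pow _ 3 (by norm_num)
      omega

lemma two_pow_le' {t : ℕ} (ht : 2 ≤ t) : 2 ^ t ≤ 4 * 3 ^ (t - 2) := by
  obtain ⟨s, rfl⟩ : ∃ s, t = s + 2 := ⟨t - 2, by omega⟩
  rw [pow_add, Nat.add_sub_cancel]
  calc 2 ^ s * 2 ^ 2 = 4 * 2 ^ s := by ring
    _ ≤ 4 * 3 ^ s := Nat.mul_le_mul_left 4 (Nat.pow_le_pow_left (by norm_num) s)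

theorem largest_elements_at_height (k : ℕ) (hk : 2 < k) (n : ℕ) :
    (H n = k ∧ 4 * 3 ^ (k - 2) < n ∧ n ≤ 2 * 3 ^ (k - 1)) ↔
    ∃ a : ℕ, 2 ≤ a ∧ a ≤ k ∧ (2 * 3 ^ (a - 2) + 1).Prime ∧
      n = 2 * 3 ^ (k - a) * (2 * 3 ^ (a - 2) + 1) := by
  have hk2 : 1 ≤ k - 2 := by omega
  have hpow12 : 12 ≤ 4 * 3 ^ (k - 2) := by
    have : 3 ≤ 3 ^ (k - 2) := by
      calc (3:ℕ) = 3 ^ 1 := by norm_num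
      _ ≤ 3 ^ (k - 2) := Nat.pow_le_pow_right (by norm_num) hk2
    omega
  have hk12 : 3 ^ (k - 1) = 3 ^ (k - 2) * 3 := by
    rw [← pow_succ]; congr 1; omega
  constructor
  · rintro ⟨hH, h1, h2⟩
    have hn2 : 2 ≤ n := by omega
    have hn0 : n ≠ 0 := by omega
    have hHW : H n = W n + max 1 (n.factorization 2) := H_eq_s15 n hn2
    set t := n.factorization 2 with htdef
    set m := ordCompl[2] n with hmdef
    have hm0 : m ≠ 0 := (Nat.ordCompl_pos 2 hn0).ne'
    have h2m : ¬ 2 ∣ m := Nat.not_dvd_ordCompl Nat.prime_two hn0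
    have hmodd : Odd m := Nat.odd_iff.mpr (by omega)
    have hnm : n = 2 ^ t * m := (Nat.ordProj_mul_ordCompl_eq_self n 2).symm
    have hWn : W n = W m := by
      rw [hnm, W_mul (pow_ne_zero _ (by norm_num)) hm0, W_two_pow, zero_add]
    have hmB0 : m ≤ 3 ^ W m := B0 m hmodd
    rcases Nat.lt_or_ge t 2 with ht2 | ht2
    · -- t = 0 or 1
      have hmax : max 1 t = 1 := by omega
      rw [hmax, hWn] at hHW
      have hWm : W m = k - 1 := by omega
      interval_cases t
      · -- n odd: contradiction
        exfalso
        rw [pow_zero, one_mul] at hnm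
        have : n ≤ 3 ^ (k - 1) := by rw [hnm, ← hWm] at *; exact hmB0
        rw [hk12] at this
        omega
      · -- t = 1 : the main case
        rw [pow_one] at hnm
        have hm3 : 3 ≤ m := by omega
        have hbig : 2 * 3 ^ W m < 3 * m := by
          rw [hWm]
          have h31 : 2 * 3 ^ (k - 1) = 4 * 3 ^ (k - 2) + 2 * 3 ^ (k - 2) := by
            rw [hk12]; ring
          omega
        obtain ⟨a, ha2, hale, hap, hastruct⟩ := lemB m hmodd hm3 hbig
        refine ⟨a, ha2, by omega, hap, ?_⟩
        have hexp : W m + 1 - a = k - a := by omega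
        rw [hnm, hastruct, hexp]
        ring
    · -- t ≥ 2 : contradiction
      exfalso
      have hmax : max 1 t = t := by omega
      rw [hmax, hWn] at hHW
      have htk : t ≤ k := by omega
      have hWm : W m = k - t := by omega
      have hle : n ≤ 2 ^ t * 3 ^ (k - t) := by
        rw [hnm, ← hWm]
        exact Nat.mul_le_mul_left _ hmB0
      have hle2 : 2 ^ t * 3 ^ (k - t) ≤ 4 * 3 ^ (k - 2) := by
        calc 2 ^ t * 3 ^ (k - t) ≤ (4 * 3 ^ (t - 2)) * 3 ^ (k - t) :=
              Nat.mul_le_mul_right _ (two_pow_le' ht2)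
          _ = 4 * 3 ^ (t - 2 + (k - t)) := by rw [mul_assoc, ← pow_add]
          _ = 4 * 3 ^ (k - 2) := by congr 2; omega
      omega
  · rintro ⟨a, ha2, hak, hp, rfl⟩
    set p := 2 * 3 ^ (a - 2) + 1 with hpdef
    have hexp : (k - a) + (a - 2) = k - 2 := by omega
    have hval : 2 * 3 ^ (k - a) * p = 4 * 3 ^ (k - 2) + 2 * 3 ^ (k - a) := by
      rw [hpdef]
      calc 2 * 3 ^ (k - a) * (2 * 3 ^ (a - 2) + 1)
          = 4 * (3 ^ (k - a) * 3 ^ (a - 2)) + 2 * 3 ^ (k - a) := by ring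
        _ = 4 * 3 ^ ((k - a) + (a - 2)) + 2 * 3 ^ (k - a) := by rw [pow_add]
        _ = 4 * 3 ^ (k - 2) + 2 * 3 ^ (k - a) := by rw [hexp]
    have hmono : 3 ^ (k - a) ≤ 3 ^ (k - 2) := Nat.pow_le_pow_right (by norm_num) (by omega)
    have hpos : 1 ≤ 3 ^ (k - a) := Nat.one_le_pow _ 3 (by norm_num)
    refine ⟨?_, ?_, ?_⟩
    · -- H value
      have hModd : ¬ 2 ∣ (3 ^ (k - a) * p) := by
        intro h2
        rcases (Nat.Prime.dvd_mul Nat.prime_two).mp h2 with h | h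
        · have := Nat.Prime.dvd_of_dvd_pow (p := 2) (n := k - a) Nat.prime_two h
          norm_num at this
        · rw [hpdef] at h; omega
      have hM0 : (3 ^ (k - a) * p) ≠ 0 := by positivity
      have hn2 : 2 ≤ 2 * 3 ^ (k - a) * p := by nlinarith [hp.two_le]
      rw [mul_assoc, H_eq_s15 _ (by omega)]
      have hW : W (2 * (3 ^ (k - a) * p)) = (k - a) + c p := by
        rw [W_mul (by norm_num) hM0, W_two, W_mul (by positivity) (by rw [hpdef]; omega),
          W_three_pow, W_prime hp, zero_add]
      have hv2 : (2 * (3 ^ (k - a) * p)).factorization 2 = 1 := by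
        rw [v2_mul (by norm_num) hM0, v2_two, v2_of_odd hModd]
      have hcp : c p = a - 1 := by
        rw [c_prime_eq hp]
        have hp1 : p - 1 = 2 * 3 ^ (a - 2) := by rw [hpdef]; omega
        rw [hp1, W_mul (by norm_num) (by positivity), W_two, W_three_pow, zero_add,
          v2_mul (by norm_num) (by positivity), v2_two]
        have : ((3:ℕ) ^ (a - 2)).factorization 2 = 0 := by
          rw [v2_pow, v2_odd_prime Nat.prime_three (by norm_num), mul_zero]
        rw [this]
        omega
      rw [hW, hv2, hcp]
      omega
    · rw [hval]; omega
    · rw [hval]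
      have : 2 * 3 ^ (k - 1) = 4 * 3 ^ (k - 2) + 2 * 3 ^ (k - 2) := by rw [hk12]; ring
      omega
end
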